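/- The set of contractions of class (S) on a complex Banach space is convex: if A₁,…,A_N are contractions satisfying condition (S) and α₁,…,α_N > 0 with Σα_k = 1, then T = Σ α_k A_k satisfies condition (S). -/

import Mathlib

open Filter Topology

theorem stmt8 {X : Type*} [NormedAddCommGroup X] [NormedSpace ℂ X] [CompleteSpace X]
    (N : ℕ) (A : Fin N → (X →L[ℂ] X)) (hA : ∀ k, ‖A k‖ ≤ 1)
    (α : Fin N → ℝ) (hα : ∀ k, 0 < α k) (hsum : ∑ k, α k = 1)
    (hS : ∀ k, ∀ x : ℕ → X, (∀ j, ‖x j‖ ≤ 1) →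
      Tendsto (fun j => ‖(A k) (x j)‖) atTop (𝓝 1) →
      Tendsto (fun j => ‖x j - (A k) (x j)‖) atTop (𝓝 0)) :
    ∀ x : ℕ → X, (∀ j, ‖x j‖ ≤ 1) →
      Tendsto (fun j => ‖(∑ k, (α k : ℂ) • A k) (x j)‖) atTop (𝓝 1) →
      Tendsto (fun j => ‖x j - (∑ k, (α k : ℂ) • A k) (x j)‖) atTop (𝓝 0) := by
  intro x hx hT
  have hTapp : ∀ v : X, (∑ k, (α k : ℂ) • A k) v = ∑ k, (α k : ℂ) • (A k v) := by
    intro v; simp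
  -- each A k x j have norm ≤ 1
  have hub : ∀ k, ∀ j, ‖A k (x j)‖ ≤ 1 := by
    intro k j
    calc ‖A k (x j)‖ ≤ ‖A k‖ * ‖x j‖ := (A k).le_opNorm _
    _ ≤ 1 * 1 := mul_le_mul (hA k) (hx j) (norm_nonneg _) zero_le_one
    _ = 1 := one_mul 1
  -- key: for each k, ‖A k (x j)‖ → 1
  have hk1 : ∀ k, Tendsto (fun j => ‖A k (x j)‖) atTop (𝓝 1) := by
    intro k
    have hlb : ∀ j, ‖(∑ m, (α m : ℂ) • A m) (x j)‖ ≤ α k * ‖A k (x j)‖ + (1 - α k) := by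
      intro j
      rw [hTapp]
      calc ‖∑ m, (α m : ℂ) • (A m (x j))‖ ≤ ∑ m, ‖(α m : ℂ) • (A m (x j))‖ :=
            norm_sum_le _ _
      _ = ∑ m, α m * ‖A m (x j)‖ := by
            apply Finset.sum_congr rfl
            intro m _
            rw [norm_smul, Complex.norm_real, Real.norm_eq_abs, abs_of_pos (hα m)]
      _ = α k * ‖A k (x j)‖ + ∑ m ∈ Finset.univ.erase k, α m * ‖A m (x j)‖ := by
            exact (Finset.add_sum_erase _ (fun m => α m * ‖A m (x j)‖) (Finset.mem_univ k)).symm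
      _ ≤ α k * ‖A k (x j)‖ + ∑ m ∈ Finset.univ.erase k, α m := by
            have : ∀ m ∈ Finset.univ.erase k, α m * ‖A m (x j)‖ ≤ α m := by
              intro m _
              nlinarith [hub m j, (hα m).le]
            linarith [Finset.sum_le_sum this]
      _ = α k * ‖A k (x j)‖ + (1 - α k) := by
            have : ∑ m ∈ Finset.univ.erase k, α m = 1 - α k := by
              have := Finset.add_sum_erase Finset.univ α (Finset.mem_univ k)
              rw [hsum] at this; linarith
            rw [this]
    have hαk := hα k
    have hlow : Tendsto (fun j => (‖(∑ m, (α m : ℂ) • A m) (x j)‖ - (1 - α k)) / α k)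
        atTop (𝓝 1) := by
      have h1 : (1 - (1 - α k)) / α k = 1 := by field_simp; ring
      have := (hT.sub_const (1 - α k)).div_const (α k)
      rwa [h1] at this
    apply tendsto_of_tendsto_of_tendsto_of_le_of_le hlow tendsto_const_nhds
    · intro j
      rw [div_le_iff₀ hαk]
      have := hlb j
      linarith [mul_comm (α k) (‖A k (x j)‖)]
    · intro j; exact hub k j
  -- apply (S) for each k and sum
  have hdiff : ∀ k, Tendsto (fun j => x j - A k (x j)) atTop (𝓝 0) := by
    intro k
    exact tendsto_zero_iff_norm_tendsto_zero.mpr (hS k x hx (hk1 k))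
  have hsumC : (∑ k, (α k : ℂ)) = 1 := by
    rw [← Complex.ofReal_sum, hsum, Complex.ofReal_one]
  have hrw : ∀ j, x j - (∑ k, (α k : ℂ) • A k) (x j)
      = ∑ k, (α k : ℂ) • (x j - A k (x j)) := by
    intro j
    rw [hTapp]
    simp only [smul_sub, Finset.sum_sub_distrib, ← Finset.sum_smul, hsumC, one_smul]
  rw [tendsto_zero_iff_norm_tendsto_zero.symm] at *
  simp only [hrw]
  have := tendsto_finset_sum Finset.univ fun (k : Fin N) (_ : k ∈ Finset.univ) =>
    (hdiff k).const_smul ((α k : ℂ))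
  simpa using this
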